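/- For every function f : {1, …, K} → ℂ and every x ∈ {1, …, K}, as n → ∞: E_x[f(Y_n) 1_{τ > n}] = Σ_{k=0}^{T−1} conj(λ_k)^n · conj(w_k(x)) · ⟨v_k, f⟩ + o(ρ^n), where f is viewed as a vector of ℂ^K and ⟨·,·⟩ is the Hermitian inner product. -/

import Mathlib

open Filter Asymptotics

/-- `n`-step sub-transition probabilities: `mpow Q n x y = P_x(Y_n = y, τ > n)`. -/
noncomputable def mpow {K : ℕ} (Q : Fin K → Fin K → ℝ) : ℕ → Fin K → Fin K → ℝ
  | 0 => fun x y => if x = y then 1 else 0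
  | n + 1 => fun x y => ∑ z, mpow Q n x z * Q z y

/-- The left eigenvector `v_l` : `v_l(y) = exp(-2iπ·j(y)·l/T)·ν(y)` where `j(y)` is the index
of the cyclic class of `y`. -/
noncomputable def vkC {K T : ℕ} (j : Fin K → ZMod T) (ν : Fin K → ℝ) (l : ℕ) (y : Fin K) : ℂ :=
  Complex.exp (-(2 * (Real.pi : ℂ) * Complex.I * ((j y).val : ℂ) * (l : ℂ)) / (T : ℂ)) * (ν y : ℂ)

/-- The right eigenvector `w_l` : `w_l(y) = exp(2iπ·j(y)·l/T)·ξ(y)`. -/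
noncomputable def wkC {K T : ℕ} (j : Fin K → ZMod T) (ξ : Fin K → ℝ) (l : ℕ) (y : Fin K) : ℂ :=
  Complex.exp ((2 * (Real.pi : ℂ) * Complex.I * ((j y).val : ℂ) * (l : ℂ)) / (T : ℂ)) * (ξ y : ℂ)

lemma mpow_nonneg {K : ℕ} {Q : Fin K → Fin K → ℝ} (hQ : ∀ x y, 0 ≤ Q x y) :
    ∀ n x y, 0 ≤ mpow Q n x y := by
  intro n
  induction n with
  | zero => intro x y; simp only [mpow]; positivity
  | succ n ih =>
    intro x y
    simp only [mpow]
    exact Finset.sum_nonneg fun z _ => mul_nonneg (ih x z) (hQ z y)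

lemma mpow_add {K : ℕ} (Q : Fin K → Fin K → ℝ) (m n : ℕ) (x y : Fin K) :
    mpow Q (m + n) x y = ∑ z, mpow Q m x z * mpow Q n z y := by
  induction n generalizing x y with
  | zero =>
    simp only [Nat.add_zero, mpow]
    rw [Finset.sum_congr rfl (fun z _ => by rw [mul_ite, mul_one, mul_zero]),
      Finset.sum_ite_eq' Finset.univ y (fun z => mpow Q m x z)]
    simp
  | succ n ih =>
    show mpow Q (m + n + 1) x y = _
    have : mpow Q (m + n + 1) x y = ∑ z, mpow Q (m+n) x z * Q z y := rfl
    rw [this]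
    simp only [fun z => ih x z]
    simp only [Finset.sum_mul]
    rw [Finset.sum_comm]
    refine Finset.sum_congr rfl fun z _ => ?_
    have h2 : mpow Q (n+1) z y = ∑ w, mpow Q n z w * Q w y := rfl
    rw [h2, Finset.mul_sum]
    exact Finset.sum_congr rfl fun w _ => by ring

lemma mpow_rowsum {K : ℕ} {A : Fin K → Fin K → ℝ} (hA1 : ∀ x, ∑ y, A x y = 1) :
    ∀ n x, ∑ y, mpow A n x y = 1 := by
  intro n
  induction n with
  | zero => intro x; simp [mpow]
  | succ n ih =>
    intro x
    simp only [mpow]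
    rw [Finset.sum_comm]
    calc ∑ z, ∑ y, mpow A n x z * A z y = ∑ z, mpow A n x z * ∑ y, A z y := by
          simp [Finset.mul_sum]
      _ = 1 := by simp only [hA1, mul_one]; exact ih x

lemma mpow_le_one {K : ℕ} {A : Fin K → Fin K → ℝ} (hA0 : ∀ x y, 0 ≤ A x y)
    (hA1 : ∀ x, ∑ y, A x y = 1) (n : ℕ) (x y : Fin K) : mpow A n x y ≤ 1 := by
  rw [← mpow_rowsum hA1 n x]
  exact Finset.single_le_sum (fun z _ => mpow_nonneg hA0 n x z) (Finset.mem_univ y)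

lemma mpow_pos_exists {K : ℕ} {A : Fin K → Fin K → ℝ} (hA0 : ∀ x y, 0 ≤ A x y)
    {n : ℕ} {x y : Fin K} (h : 0 < mpow A (n+1) x y) :
    ∃ z, 0 < mpow A n x z ∧ 0 < A z y := by
  have : (mpow A (n+1) x y) ≠ 0 := ne_of_gt h
  simp only [mpow] at this
  obtain ⟨z, _, hz⟩ := Finset.exists_ne_zero_of_sum_ne_zero this
  refine ⟨z, ?_, ?_⟩
  · rcases lt_or_eq_of_le (mpow_nonneg hA0 n x z) with h' | h'
    · exact h'
    · exact absurd (by rw [← h', zero_mul]) hz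
  · rcases lt_or_eq_of_le (hA0 z y) with h' | h'
    · exact h'
    · exact absurd (by rw [← h', mul_zero]) hz

lemma mpow_support {K T : ℕ} {A : Fin K → Fin K → ℝ} (hA0 : ∀ x y, 0 ≤ A x y)
    {j : Fin K → ZMod T} (hj : ∀ x y, 0 < A x y → j y = j x + 1) :
    ∀ n x y, 0 < mpow A n x y → j y = j x + (n : ZMod T) := by
  intro n
  induction n with
  | zero =>
    intro x y h
    simp only [mpow] at h
    by_cases hxy : x = y
    · subst hxy; simp
    · simp [hxy] at h
  | succ n ih =>
    intro x y h
    obtain ⟨z, h1, h2⟩ := mpow_pos_exists hA0 h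
    rw [hj z y h2, ih x z h1]
    push_cast
    ring

lemma mpow_vanish {K T : ℕ} {A : Fin K → Fin K → ℝ} (hA0 : ∀ x y, 0 ≤ A x y)
    {j : Fin K → ZMod T} (hj : ∀ x y, 0 < A x y → j y = j x + 1)
    {n : ℕ} {x y : Fin K} (h : j y ≠ j x + (n : ZMod T)) : mpow A n x y = 0 := by
  rcases lt_or_eq_of_le (mpow_nonneg hA0 n x y) with h' | h'
  · exact absurd (mpow_support hA0 hj n x y h') h
  · exact h'.symm

lemma addclosed_eventually {S : Set ℕ}
    (hadd : ∀ a ∈ S, ∀ b ∈ S, a + b ∈ S)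
    (hex : ∃ a ∈ S, 0 < a)
    (hgcd : ∀ d : ℕ, (∀ a ∈ S, d ∣ a) → d ∣ 1) :
    ∃ N, ∀ n, N ≤ n → n ∈ S := by
  classical
  set S0 : Set ℕ := insert 0 S with hS0
  have h0 : (0 : ℕ) ∈ S0 := Set.mem_insert 0 S
  have hadd0 : ∀ a ∈ S0, ∀ b ∈ S0, a + b ∈ S0 := by
    rintro a (rfl | ha) b hb
    · simpa using hb
    · rcases hb with rfl | hb
      · rw [add_zero]; exact Set.mem_insert_iff.2 (Or.inr ha)
      · exact Set.mem_insert_iff.2 (Or.inr (hadd a ha b hb))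
  have hsmul : ∀ (k x : ℕ), x ∈ S0 → k * x ∈ S0 := by
    intro k
    induction k with
    | zero => intro x _; simpa using h0
    | succ k ih =>
      intro x hx
      have : (k + 1) * x = k * x + x := by ring
      rw [this]
      exact hadd0 _ (ih x hx) _ hx
  have hmemS : ∀ n ∈ S0, n ≠ 0 → n ∈ S := by
    rintro n (rfl | hn) h
    · exact absurd rfl h
    · exact hn
  set P : ℕ → Prop := fun d => 0 < d ∧ ∃ p ∈ S0, ∃ q ∈ S0, p = q + d with hP
  obtain ⟨a, haS, hapos⟩ := hex
  have hPex : ∃ d, P d := ⟨a, hapos, a, Set.mem_insert_iff.2 (Or.inr haS), 0, h0, (zero_add a).symm⟩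
  set m := Nat.find hPex with hm
  obtain ⟨hmpos, p0, hp0, q0, hq0, hpq⟩ := Nat.find_spec hPex
  -- m divides every element of S
  have hmdvd : ∀ s ∈ S, m ∣ s := by
    intro s hs
    by_contra hnd
    have hr : s % m ≠ 0 := fun h => hnd (Nat.dvd_iff_mod_eq_zero.2 h)
    have hrP : P (s % m) := by
      refine ⟨Nat.pos_of_ne_zero hr, s + (s / m) * q0, ?_, (s / m) * p0, ?_, ?_⟩
      · exact hadd0 s (Set.mem_insert_iff.2 (Or.inr hs)) _ (hsmul _ _ hq0)
      · exact hsmul _ _ hp0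
      · have key : m * (s / m) + s % m = s := Nat.div_add_mod s m
        have hexp : s / m * (q0 + m) = s / m * q0 + m * (s / m) := by ring
        rw [hpq, ← hm, hexp, add_assoc, key, add_comm]
    exact Nat.find_min hPex (Nat.mod_lt s hmpos) hrP
  have hm1 : m = 1 := Nat.dvd_one.mp (hgcd m hmdvd)
  have hpq1 : p0 = q0 + 1 := by rw [hpq, ← hm, hm1]
  -- p0 = q0 + 1 with both in S0
  rcases Nat.eq_zero_or_pos q0 with hq | hq
  · -- 1 ∈ S
    rw [hq, zero_add] at hpq1
    rw [hpq1] at hp0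
    have h1 : (1 : ℕ) ∈ S := hmemS 1 hp0 one_ne_zero
    refine ⟨1, fun n hn => ?_⟩
    have : n * 1 ∈ S0 := hsmul n 1 (Set.mem_insert_iff.2 (Or.inr h1))
    rw [mul_one] at this
    exact hmemS n this (by omega)
  · refine ⟨q0 * q0 + 1, fun n hn => ?_⟩
    have hq0S : q0 ∈ S0 := hq0
    have hp0S : p0 ∈ S0 := hp0
    set aa := n / q0 with ha
    set r := n % q0 with hr2
    have hrlt : r < q0 := Nat.mod_lt n hq
    have haq : q0 ≤ aa := by
      rw [ha, Nat.le_div_iff_mul_le hq]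
      omega
    have hrep : n = (aa - r) * q0 + r * p0 := by
      have key2 : aa * q0 + r = n := by
        rw [ha, hr2, mul_comm]; exact Nat.div_add_mod n q0
      rw [hpq1]
      have h1 : (aa - r) * q0 = aa * q0 - r * q0 := by
        exact Nat.sub_mul aa r q0
      have h2 : r * (q0 + 1) = r * q0 + r := by ring
      rw [h1, h2]
      have : r * q0 ≤ aa * q0 := Nat.mul_le_mul_right q0 (le_trans (le_of_lt hrlt) haq)
      omega
    have hmem : (aa - r) * q0 + r * p0 ∈ S0 :=
      hadd0 _ (hsmul _ _ hq0S) _ (hsmul _ _ hp0S)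
    rw [← hrep] at hmem
    exact hmemS n hmem (by omega)
lemma mpow_stationary {K : ℕ} {A : Fin K → Fin K → ℝ} {π : Fin K → ℝ}
    (hπinv : ∀ y, ∑ z, π z * A z y = π y) :
    ∀ n y, ∑ z, π z * mpow A n z y = π y := by
  intro n
  induction n with
  | zero =>
    intro y
    simp only [mpow]
    rw [Finset.sum_congr rfl (fun z _ => by rw [mul_ite, mul_one, mul_zero]),
      Finset.sum_ite_eq' Finset.univ y π]
    simp
  | succ n ih =>
    intro y
    simp only [mpow, Finset.mul_sum]
    rw [Finset.sum_comm]
    calc ∑ w, ∑ z, π z * (mpow A n z w * A w y)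
        = ∑ w, (∑ z, π z * mpow A n z w) * A w y := by
          refine Finset.sum_congr rfl fun w _ => ?_
          rw [Finset.sum_mul]
          exact Finset.sum_congr rfl fun z _ => by ring
      _ = ∑ w, π w * A w y := by simp only [ih]
      _ = π y := hπinv y

lemma class_mass {K T : ℕ} (hT : 0 < T) {A : Fin K → Fin K → ℝ}
    (hA0 : ∀ x y, 0 ≤ A x y) (hA1 : ∀ x, ∑ y, A x y = 1)
    {j : Fin K → ZMod T} (hjA : ∀ x y, 0 < A x y → j y = j x + 1)
    {π : Fin K → ℝ}
    (hπinv : ∀ y, ∑ z, π z * A z y = π y) (hπ1 : ∑ u, π u = 1) :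
    ∀ c : ZMod T, (∑ u ∈ Finset.univ.filter (fun u => j u = c), π u) = 1 / T := by
  classical
  haveI : NeZero T := ⟨hT.ne'⟩
  set F : ZMod T → ℝ := fun c => ∑ u ∈ Finset.univ.filter (fun u => j u = c), π u with hF
  have hstep : ∀ c, F (c + 1) = F c := by
    intro c
    have h1 : F (c + 1) = ∑ u ∈ Finset.univ.filter (fun u => j u = c + 1), ∑ z, π z * A z u := by
      exact Finset.sum_congr rfl fun u _ => (hπinv u).symm
    rw [h1, Finset.sum_comm]
    have h2 : ∀ z : Fin K, (∑ u ∈ Finset.univ.filter (fun u => j u = c + 1), π z * A z u)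
        = π z * (if j z = c then 1 else 0) := by
      intro z
      rw [← Finset.mul_sum]
      congr 1
      by_cases hz : j z = c
      · rw [if_pos hz]
        rw [Finset.sum_subset (Finset.filter_subset _ _)]
        · exact hA1 z
        · intro u _ hu
          simp only [Finset.mem_filter, Finset.mem_univ, true_and] at hu
          rcases lt_or_eq_of_le (hA0 z u) with h' | h'
          · exact absurd (by rw [hjA z u h', hz]) hu
          · exact h'.symm
      · rw [if_neg hz]
        refine Finset.sum_eq_zero fun u hu => ?_
        simp only [Finset.mem_filter, Finset.mem_univ, true_and] at hu
        rcases lt_or_eq_of_le (hA0 z u) with h' | h'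
        · exact absurd (add_right_cancel ((hjA z u h').symm.trans hu)) hz
        · exact h'.symm
    rw [Finset.sum_congr rfl fun z _ => h2 z]
    rw [Finset.sum_congr rfl fun z _ => (by rw [mul_ite, mul_one, mul_zero] :
      π z * (if j z = c then 1 else 0) = if j z = c then π z else 0)]
    rw [← Finset.sum_filter]
  have hconst : ∀ c : ZMod T, F c = F 0 := by
    have hnat : ∀ (k : ℕ), F (k : ZMod T) = F 0 := by
      intro k
      induction k with
      | zero => simp
      | succ k ih => push_cast; rw [hstep, ih]
    intro c
    have : ((c.val : ℕ) : ZMod T) = c := by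
      rw [ZMod.natCast_val, ZMod.cast_id]
    rw [← this, hnat]
  have hsum : ∑ c : ZMod T, F c = 1 := by
    rw [hF]
    simp only
    rw [Finset.sum_fiberwise Finset.univ j π]
    exact hπ1
  have hcard : (Fintype.card (ZMod T) : ℝ) = T := by rw [ZMod.card]
  intro c
  have : (T : ℝ) * F 0 = 1 := by
    rw [← hcard, ← Finset.card_univ, ← hsum]
    rw [Finset.sum_congr rfl fun c _ => hconst c, Finset.sum_const, nsmul_eq_mul,
      Finset.card_univ]
  have hTne : (T : ℝ) ≠ 0 := by positivity
  change F c = 1 / (T : ℝ)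
  rw [hconst c]
  field_simp at this ⊢
  linarith [this]

lemma conv_main {K T : ℕ} (hT : 0 < T) {A : Fin K → Fin K → ℝ}
    (hA0 : ∀ x y, 0 ≤ A x y) (hA1 : ∀ x, ∑ y, A x y = 1)
    {j : Fin K → ZMod T} (hjA : ∀ x y, 0 < A x y → j y = j x + 1)
    {π : Fin K → ℝ} (hπ0 : ∀ u, 0 ≤ π u)
    (hπinv : ∀ y, ∑ z, π z * A z y = π y) (hπ1 : ∑ u, π u = 1)
    (x y : Fin K)
    (hirrA : ∀ u, ∃ n, 0 < mpow A n u y)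
    (hdvdy : ∀ n, 0 < n → 0 < mpow A n y y → T ∣ n)
    (hgcdy : ∀ d : ℕ, (∀ n, 0 < n → 0 < mpow A n y y → d ∣ n) → d ∣ T) :
    Filter.Tendsto
      (fun n : ℕ => mpow A n x y - (if ((n : ZMod T) = j y - j x) then (T : ℝ) * π y else 0))
      Filter.atTop (nhds 0) := by
  classical
  haveI : NeZero T := ⟨hT.ne'⟩
  set C : Finset (Fin K) := Finset.univ.filter (fun u => j u = j y) with hC
  have hyC : y ∈ C := by simp [hC]
  have hCne : C.Nonempty := ⟨y, hyC⟩
  have hmemC : ∀ u, u ∈ C ↔ j u = j y := by intro u; simp [hC]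
  have hmT : ∀ m : ℕ, ((m * T : ℕ) : ZMod T) = 0 := by
    intro m; push_cast; simp [ZMod.natCast_self]
  have hvan : ∀ (m : ℕ) (u : Fin K), j u ≠ j y → mpow A (m * T) u y = 0 := by
    intro m u hne
    apply mpow_vanish hA0 hjA
    rw [hmT, add_zero]
    exact fun h => hne h.symm
  set Mx : ℕ → ℝ := fun m => C.sup' hCne (fun u => mpow A (m * T) u y) with hMx
  set mn : ℕ → ℝ := fun m => C.inf' hCne (fun u => mpow A (m * T) u y) with hmn
  have hmn0 : ∀ m, 0 ≤ mn m :=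
    fun m => Finset.le_inf' hCne _ fun u _ => mpow_nonneg hA0 _ u y
  have hMx1 : ∀ m, Mx m ≤ 1 :=
    fun m => Finset.sup'_le hCne _ fun u _ => mpow_le_one hA0 hA1 _ u y
  have hmnMx : ∀ m, mn m ≤ Mx m :=
    fun m => le_trans (Finset.inf'_le _ hyC) (Finset.le_sup' (fun u => mpow A (m * T) u y) hyC)
  have hMx0 : ∀ m, 0 ≤ Mx m := fun m => le_trans (hmn0 m) (hmnMx m)
  -- the key one-step (of size s) contraction bound
  have key : ∀ (s : ℕ) (δ : ℝ), 0 ≤ δ → (∀ u ∈ C, δ ≤ mpow A (s * T) u y) →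
      ∀ m, Mx (m + s) ≤ δ * mpow A (m * T) y y + (1 - δ) * Mx m ∧
        δ * mpow A (m * T) y y + (1 - δ) * mn m ≤ mn (m + s) := by
    intro s δ hδ0 hδ m
    have hub : ∀ u ∈ C, mpow A ((m + s) * T) u y ≤ δ * mpow A (m * T) y y + (1 - δ) * Mx m ∧
        δ * mpow A (m * T) y y + (1 - δ) * mn m ≤ mpow A ((m + s) * T) u y := by
      intro u huC
      have hsplit : mpow A ((m + s) * T) u y
          = ∑ z, mpow A (s * T) u z * mpow A (m * T) z y := by
        rw [show (m + s) * T = s * T + m * T by ring, mpow_add]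
      set w : Fin K → ℝ := fun z => mpow A (s * T) u z - (if z = y then δ else 0) with hw
      have hw0 : ∀ z, 0 ≤ w z := by
        intro z
        rw [hw]
        by_cases hz : z = y
        · subst hz; simpa using sub_nonneg.2 (hδ u huC)
        · simpa [hz] using mpow_nonneg hA0 (s * T) u z
      have hwsum : ∑ z, w z = 1 - δ := by
        rw [hw]
        simp only
        rw [Finset.sum_sub_distrib, mpow_rowsum hA1, Finset.sum_ite_eq' Finset.univ y
          (fun _ => δ)]
        simp
      have hdecomp : mpow A ((m + s) * T) u y
          = δ * mpow A (m * T) y y + ∑ z, w z * mpow A (m * T) z y := by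
        rw [hsplit]
        have : ∀ z, mpow A (s * T) u z * mpow A (m * T) z y
            = w z * mpow A (m * T) z y + (if z = y then δ * mpow A (m * T) z y else 0) := by
          intro z
          rw [hw]
          by_cases hz : z = y <;> simp [hz] <;> ring
        rw [Finset.sum_congr rfl fun z _ => this z, Finset.sum_add_distrib,
          Finset.sum_ite_eq' Finset.univ y (fun z => δ * mpow A (m * T) z y)]
        simp only [Finset.mem_univ, if_true]
        ring
      constructor
      · rw [hdecomp]
        have hb : ∑ z, w z * mpow A (m * T) z y ≤ ∑ z, w z * Mx m := by
          refine Finset.sum_le_sum fun z _ => ?_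
          by_cases hz : j z = j y
          · exact mul_le_mul_of_nonneg_left
              (Finset.le_sup' (fun u => mpow A (m * T) u y) ((hmemC z).2 hz)) (hw0 z)
          · rw [hvan m z hz, mul_zero]
            exact mul_nonneg (hw0 z) (hMx0 m)
        rw [← Finset.sum_mul, hwsum] at hb
        linarith
      · rw [hdecomp]
        have hb : ∑ z, w z * mn m ≤ ∑ z, w z * mpow A (m * T) z y := by
          refine Finset.sum_le_sum fun z _ => ?_
          by_cases hz : j z = j y
          · exact mul_le_mul_of_nonneg_left
              (Finset.inf'_le (fun u => mpow A (m * T) u y) ((hmemC z).2 hz)) (hw0 z)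
          · rw [hvan m z hz, mul_zero]
            -- need w z * mn m ≤ 0; in fact w z = 0 here
            have hwz : w z = 0 := by
              rw [hw]
              have h0 : mpow A (s * T) u z = 0 := by
                apply mpow_vanish hA0 hjA
                rw [hmT]
                intro hjz
                rw [add_zero] at hjz
                exact hz (hjz.trans ((hmemC u).1 huC))
              have hzy : z ≠ y := fun h => hz (h ▸ rfl)
              simp [h0, hzy]
            simp [hwz]
        rw [← Finset.sum_mul, hwsum] at hb
        linarith
    constructor
    · exact Finset.sup'_le hCne _ fun u huC => (hub u huC).1
    · exact Finset.le_inf' hCne _ fun u huC => (hub u huC).2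
  -- product positivity
  have hprod : ∀ (a b : ℕ) (u v w : Fin K), 0 < mpow A a u v → 0 < mpow A b v w →
      0 < mpow A (a + b) u w := by
    intro a b u v w h1 h2
    rw [mpow_add]
    refine lt_of_lt_of_le (mul_pos h1 h2) ?_
    exact Finset.single_le_sum
      (f := fun z => mpow A a u z * mpow A b z w)
      (fun z _ => mul_nonneg (mpow_nonneg hA0 a u z) (mpow_nonneg hA0 b z w))
      (Finset.mem_univ v)
  -- return times: eventually all multiples of T come back to y
  have hret : ∃ N : ℕ, ∀ m, N ≤ m → 0 < mpow A (m * T) y y := by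
    set S : Set ℕ := {m : ℕ | 0 < m ∧ 0 < mpow A (m * T) y y} with hS
    have hadd : ∀ a ∈ S, ∀ b ∈ S, a + b ∈ S := by
      rintro a ⟨ha0, ha⟩ b ⟨hb0, hb⟩
      exact ⟨by omega, by rw [add_mul]; exact hprod _ _ _ _ _ ha hb⟩
    have hex : ∃ a ∈ S, 0 < a := by
      by_contra hno
      push_neg at hno
      have hvac : ∀ n, 0 < n → 0 < mpow A n y y → (T + 1) ∣ n := by
        intro n hn hp
        obtain ⟨m, hm⟩ := hdvdy n hn hp
        have hm0 : 0 < m := by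
          rcases Nat.eq_zero_or_pos m with h | h
          · exfalso; rw [h, mul_zero] at hm; omega
          · exact h
        have : m ∈ S := ⟨hm0, by rw [mul_comm, ← hm]; exact hp⟩
        exact absurd hm0 (by simpa using hno m this)
      have := hgcdy (T + 1) hvac
      exact absurd (Nat.le_of_dvd hT this) (by omega)
    have hgcd : ∀ d : ℕ, (∀ a ∈ S, d ∣ a) → d ∣ 1 := by
      intro d hd
      have hall : ∀ n, 0 < n → 0 < mpow A n y y → (d * T) ∣ n := by
        intro n hn hp
        obtain ⟨m, hm⟩ := hdvdy n hn hp
        have hm0 : 0 < m := by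
          rcases Nat.eq_zero_or_pos m with h | h
          · exfalso; rw [h, mul_zero] at hm; omega
          · exact h
        have hmS : m ∈ S := ⟨hm0, by rw [mul_comm, ← hm]; exact hp⟩
        obtain ⟨e, he⟩ := hd m hmS
        exact ⟨e, by rw [hm, he]; ring⟩
      have hdT := hgcdy (d * T) hall
      obtain ⟨k, hk⟩ := hdT
      have h2 : T * 1 = T * (d * k) := by
        rw [mul_one]
        conv_lhs => rw [hk]
        ring
      have h1 : 1 = d * k := Nat.eq_of_mul_eq_mul_left hT h2
      exact ⟨k, h1⟩
    obtain ⟨N, hN⟩ := addclosed_eventually hadd hex hgcd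
    exact ⟨N + 1, fun m hm => (hN m (by omega)).2⟩
  obtain ⟨N, hN⟩ := hret
  -- uniform positive hitting of y from all of C
  set NN : ℕ := C.sup' hCne (fun u => (hirrA u).choose) with hNN
  set m0 : ℕ := N + NN + 1 with hm0def
  have hm0pos : 0 < m0 := by omega
  have hδex : ∀ u ∈ C, 0 < mpow A (m0 * T) u y := by
    intro u huC
    have hpos := (hirrA u).choose_spec
    set nu := (hirrA u).choose with hnu
    have hTd : T ∣ nu := by
      have hsup := mpow_support hA0 hjA nu u y hpos
      have hju : j u = j y := (hmemC u).1 huC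
      rw [hju] at hsup
      have : ((nu : ℕ) : ZMod T) = 0 := by
        have := hsup.symm
        rwa [add_eq_left] at this
      exact (ZMod.natCast_eq_zero_iff nu T).1 this
    obtain ⟨b, hb⟩ := hTd
    have hble : b ≤ NN := by
      have h1 : nu ≤ NN := Finset.le_sup' (fun u => (hirrA u).choose) huC
      have h2 : b ≤ T * b := Nat.le_mul_of_pos_left b hT
      omega
    have he : m0 = b + (m0 - b) := by omega
    have heN : N ≤ m0 - b := by omega
    rw [he, add_mul]
    have h1 : 0 < mpow A (b * T) u y := by rw [mul_comm, ← hb]; exact hpos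
    exact hprod _ _ _ _ _ h1 (hN _ heN)
  set δ : ℝ := C.inf' hCne (fun u => mpow A (m0 * T) u y) with hδ
  have hδpos : 0 < δ := (Finset.lt_inf'_iff hCne).2 hδex
  have hδle : ∀ u ∈ C, δ ≤ mpow A (m0 * T) u y := fun u huC => Finset.inf'_le _ huC
  have hδ1 : δ ≤ 1 := le_trans (hδle y hyC) (mpow_le_one hA0 hA1 _ y y)
  -- the gap
  set g : ℕ → ℝ := fun m => Mx m - mn m with hg
  have hg0 : ∀ m, 0 ≤ g m := fun m => sub_nonneg.2 (hmnMx m)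
  have hganti : ∀ m s : ℕ, g (m + s) ≤ g m := by
    intro m s
    have hk := key s 0 le_rfl (fun u _ => mpow_nonneg hA0 _ u y) m
    rw [hg]
    simp only
    simp only [zero_mul, sub_zero, zero_add, one_mul] at hk
    linarith [hk.1, hk.2]
  have hcontr : ∀ m, g (m + m0) ≤ (1 - δ) * g m := by
    intro m
    have hk := key m0 δ (le_of_lt hδpos) hδle m
    show Mx (m + m0) - mn (m + m0) ≤ (1 - δ) * (Mx m - mn m)
    have hexp : (1 - δ) * (Mx m - mn m) = (1 - δ) * Mx m - (1 - δ) * mn m := by ring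
    rw [hexp]
    linarith [hk.1, hk.2]
  have hiter : ∀ k : ℕ, g (m0 * k) ≤ (1 - δ) ^ k * g 0 := by
    intro k
    induction k with
    | zero => simp
    | succ k ih =>
      have : m0 * (k + 1) = m0 * k + m0 := by ring
      rw [this]
      calc g (m0 * k + m0) ≤ (1 - δ) * g (m0 * k) := hcontr (m0 * k)
        _ ≤ (1 - δ) * ((1 - δ) ^ k * g 0) :=
            mul_le_mul_of_nonneg_left ih (by linarith)
        _ = (1 - δ) ^ (k + 1) * g 0 := by ring
  have hgtend : Filter.Tendsto g Filter.atTop (nhds 0) := by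
    apply squeeze_zero hg0 (g := fun m => (1 - δ) ^ (m / m0) * g 0)
    · intro m
      have h1 : m0 * (m / m0) + (m - m0 * (m / m0)) = m := by
        have := Nat.mul_div_le m m0
        omega
      calc g m = g (m0 * (m / m0) + (m - m0 * (m / m0))) := by rw [h1]
        _ ≤ g (m0 * (m / m0)) := hganti _ _
        _ ≤ (1 - δ) ^ (m / m0) * g 0 := hiter _
    · have hpow : Filter.Tendsto (fun k : ℕ => (1 - δ) ^ k) Filter.atTop (nhds 0) :=
        tendsto_pow_atTop_nhds_zero_of_lt_one (by linarith) (by linarith)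
      have hdiv : Filter.Tendsto (fun m : ℕ => m / m0) Filter.atTop Filter.atTop := by
        apply Filter.tendsto_atTop.2
        intro b
        filter_upwards [Filter.eventually_ge_atTop (b * m0)] with m hm
        exact (Nat.le_div_iff_mul_le hm0pos).2 hm
      have := (hpow.comp hdiv).mul_const (g 0)
      simpa using this
  -- the stationary measure is sandwiched
  have hstat := mpow_stationary hπinv
  have hclass := class_mass hT hA0 hA1 hjA hπinv hπ1 (j y)
  have hTpos : (0 : ℝ) < T := by positivity
  have hsand : ∀ m, mn m ≤ (T : ℝ) * π y ∧ (T : ℝ) * π y ≤ Mx m := by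
    intro m
    have h1 : ∑ z ∈ C, π z * mpow A (m * T) z y = π y := by
      rw [Finset.sum_subset (Finset.filter_subset _ _)
        (fun z _ hz => by
          rw [hvan m z (by simpa [hC, Finset.mem_filter] using hz), mul_zero])]
      exact hstat (m * T) y
    have hup : π y ≤ (1 / T) * Mx m := by
      rw [← h1, ← hclass]
      rw [Finset.sum_mul]
      refine Finset.sum_le_sum fun z hz => ?_
      exact mul_le_mul_of_nonneg_left
        (Finset.le_sup' (fun u => mpow A (m * T) u y) hz) (hπ0 z)
    have hlo : (1 / T) * mn m ≤ π y := by
      rw [← h1, ← hclass]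
      rw [Finset.sum_mul]
      refine Finset.sum_le_sum fun z hz => ?_
      exact mul_le_mul_of_nonneg_left
        (Finset.inf'_le (fun u => mpow A (m * T) u y) hz) (hπ0 z)
    constructor
    · calc mn m = (T : ℝ) * ((1 / T) * mn m) := by field_simp
        _ ≤ (T : ℝ) * π y := mul_le_mul_of_nonneg_left hlo (le_of_lt hTpos)
    · calc (T : ℝ) * π y ≤ (T : ℝ) * ((1 / T) * Mx m) :=
          mul_le_mul_of_nonneg_left hup (le_of_lt hTpos)
        _ = Mx m := by field_simp
  -- sandwich for the chain itself
  have hbound : ∀ n : ℕ, ((n : ZMod T) = j y - j x) →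
      mn (n / T) ≤ mpow A n x y ∧ mpow A n x y ≤ Mx (n / T) := by
    intro n hcond
    set m := n / T with hmdef
    set r := n % T with hrdef
    have hnrep : n = r + m * T := by
      have key := Nat.div_add_mod n T
      have hcomm : m * T = T * (n / T) := by rw [hmdef, mul_comm]
      omega
    have hcast : ((r : ℕ) : ZMod T) = (n : ZMod T) := by
      conv_rhs => rw [hnrep]
      push_cast
      simp [ZMod.natCast_self]
    have hjxr : j x + ((r : ℕ) : ZMod T) = j y := by
      rw [hcast, hcond]
      ring
    have hwoff : ∀ z, z ∉ C → mpow A r x z = 0 := by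
      intro z hz
      have hjz : j z ≠ j y := by simpa [hC, Finset.mem_filter] using hz
      exact mpow_vanish hA0 hjA (fun h => hjz (h.trans hjxr))
    have hwsumC : ∑ z ∈ C, mpow A r x z = 1 := by
      rw [Finset.sum_subset (Finset.filter_subset _ _) (fun z _ hz => hwoff z hz)]
      exact mpow_rowsum hA1 r x
    have hsplitn : mpow A n x y = ∑ z ∈ C, mpow A r x z * mpow A (m * T) z y := by
      conv_lhs => rw [hnrep]
      rw [mpow_add]
      exact (Finset.sum_subset (Finset.filter_subset _ _)
        (fun z _ hz => by rw [hwoff z hz, zero_mul])).symm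
    constructor
    · rw [hsplitn]
      calc mn m = ∑ z ∈ C, mpow A r x z * mn m := by rw [← Finset.sum_mul, hwsumC, one_mul]
        _ ≤ ∑ z ∈ C, mpow A r x z * mpow A (m * T) z y :=
          Finset.sum_le_sum fun z hz => mul_le_mul_of_nonneg_left
            (Finset.inf'_le (fun u => mpow A (m * T) u y) hz) (mpow_nonneg hA0 r x z)
    · rw [hsplitn]
      calc ∑ z ∈ C, mpow A r x z * mpow A (m * T) z y
          ≤ ∑ z ∈ C, mpow A r x z * Mx m :=
          Finset.sum_le_sum fun z hz => mul_le_mul_of_nonneg_left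
            (Finset.le_sup' (fun u => mpow A (m * T) u y) hz) (mpow_nonneg hA0 r x z)
        _ = Mx m := by rw [← Finset.sum_mul, hwsumC, one_mul]
  -- conclusion
  rw [Metric.tendsto_atTop]
  intro ε hε
  obtain ⟨N1, hN1⟩ := Metric.tendsto_atTop.1 hgtend ε hε
  refine ⟨T * N1 + T, fun n hn => ?_⟩
  have hm1 : N1 ≤ n / T := by
    rw [Nat.le_div_iff_mul_le hT]
    have hcomm : N1 * T = T * N1 := mul_comm _ _
    omega
  have hgg : Mx (n / T) - mn (n / T) < ε := by
    have h := hN1 (n / T) hm1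
    rw [Real.dist_eq, sub_zero, abs_of_nonneg (hg0 _)] at h
    exact h
  rw [Real.dist_eq, sub_zero]
  by_cases hcond : (n : ZMod T) = j y - j x
  · rw [if_pos hcond]
    have hb := hbound n hcond
    have hs := hsand (n / T)
    rw [abs_sub_lt_iff]
    constructor
    · linarith [hb.2, hs.1]
    · linarith [hb.1, hs.2]
  · rw [if_neg hcond, sub_zero]
    have h0 : mpow A n x y = 0 := by
      apply mpow_vanish hA0 hjA
      intro h
      exact hcond (by rw [h]; ring)
    rw [h0, abs_zero]
    exact hε

lemma exp_sum_int (T : ℕ) (hT : 0 < T) (a : ℤ) :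
    ∑ k ∈ Finset.range T, Complex.exp (2 * (Real.pi : ℂ) * Complex.I * (k : ℂ) * (a : ℂ) / (T : ℂ))
      = if (T : ℤ) ∣ a then (T : ℂ) else 0 := by
  have hTne : (T : ℂ) ≠ 0 := by
    simp only [ne_eq, Nat.cast_eq_zero]
    omega
  set ζ : ℂ := Complex.exp (2 * (Real.pi : ℂ) * Complex.I * (a : ℂ) / (T : ℂ)) with hζ
  have hterm : ∀ k : ℕ, Complex.exp (2 * (Real.pi : ℂ) * Complex.I * (k : ℂ) * (a : ℂ) / (T : ℂ)) = ζ ^ k := by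
    intro k
    rw [hζ, ← Complex.exp_nat_mul]
    congr 1
    ring
  rw [Finset.sum_congr rfl fun k _ => hterm k]
  by_cases hdvd : (T : ℤ) ∣ a
  · rw [if_pos hdvd]
    obtain ⟨b, hb⟩ := hdvd
    have hζ1 : ζ = 1 := by
      rw [hζ, hb]
      push_cast
      rw [show 2 * (Real.pi : ℂ) * Complex.I * ((T : ℂ) * (b : ℂ)) / (T : ℂ)
          = (b : ℂ) * (2 * (Real.pi : ℂ) * Complex.I) * ((T : ℂ) / (T : ℂ)) by ring,
        div_self hTne, mul_one]
      exact Complex.exp_int_mul_two_pi_mul_I b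
    rw [hζ1]
    simp
  · rw [if_neg hdvd]
    have hζne : ζ ≠ 1 := by
      intro h
      rw [hζ, Complex.exp_eq_one_iff] at h
      obtain ⟨m, hm⟩ := h
      apply hdvd
      refine ⟨m, ?_⟩
      have hπI : (2 : ℂ) * (Real.pi : ℂ) * Complex.I ≠ 0 := by
        simp [Complex.I_ne_zero, Real.pi_ne_zero, Complex.ofReal_ne_zero]
      have h2 : (a : ℂ) = (T : ℂ) * (m : ℂ) := by
        have h := hm
        field_simp at h
        apply mul_left_cancel₀ hπI
        rw [show 2 * (Real.pi : ℂ) * Complex.I * (a : ℂ)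
            = 2 * (Real.pi : ℂ) * Complex.I * (a : ℂ) from rfl]
        rw [h]
      exact_mod_cast h2
    have hζT : ζ ^ T = 1 := by
      rw [hζ, ← Complex.exp_nat_mul]
      rw [show (T : ℂ) * (2 * (Real.pi : ℂ) * Complex.I * (a : ℂ) / (T : ℂ))
          = (a : ℂ) * (2 * (Real.pi : ℂ) * Complex.I) * ((T : ℂ) / (T : ℂ)) by ring,
        div_self hTne, mul_one]
      exact Complex.exp_int_mul_two_pi_mul_I a
    rw [geom_sum_eq hζne, hζT]
    simp

lemma mpow_scale {K : ℕ} (Q : Fin K → Fin K → ℝ) (ρ : ℝ) (hρ : 0 < ρ)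
    (ξ : Fin K → ℝ) (hξ : ∀ y, 0 < ξ y) :
    ∀ (n : ℕ) (x y : Fin K),
      mpow (fun u v => Q u v * ξ v / (ρ * ξ u)) n x y
        = mpow Q n x y * ξ y / (ρ ^ n * ξ x) := by
  intro n
  induction n with
  | zero =>
    intro x y
    by_cases hxy : x = y
    · subst hxy
      simp only [mpow, if_pos rfl, if_true, pow_zero, one_mul]
      exact (div_self (ne_of_gt (hξ x))).symm
    · simp only [mpow, if_neg hxy]
      simp
  | succ n ih =>
    intro x y
    show (∑ z, mpow (fun u v => Q u v * ξ v / (ρ * ξ u)) n x z * (Q z y * ξ y / (ρ * ξ z)))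
      = (∑ z, mpow Q n x z * Q z y) * ξ y / (ρ ^ (n + 1) * ξ x)
    rw [Finset.sum_mul, Finset.sum_div]
    refine Finset.sum_congr rfl fun z _ => ?_
    rw [ih x z]
    have h1 : ξ z ≠ 0 := ne_of_gt (hξ z)
    have h2 : ξ x ≠ 0 := ne_of_gt (hξ x)
    have h3 : ρ ≠ 0 := ne_of_gt hρ
    field_simp
    ring

/-- Spectral expansion of `E_x[f(Y_n) 1_{τ > n}]`: for every `f : {1, …, K} → ℂ` and state `x`,
`E_x[f(Y_n) 1_{τ > n}] = ∑_{k<T} conj(λ_k)^n · conj(w_k(x)) · ⟨v_k, f⟩ + o(ρ^n)`,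
where `λ_k = ρ e^{2iπk/T}`. -/
theorem killed_expectation_spectral_expansion
    {K : ℕ} (hK : 0 < K) (Q : Fin K → Fin K → ℝ)
    (hQnn : ∀ x y, 0 ≤ Q x y) (hQsub : ∀ x, ∑ y, Q x y ≤ 1)
    (habs : ∀ x, Filter.Tendsto (fun n => ∑ y, mpow Q n x y) Filter.atTop (nhds 0))
    (hirr : ∀ x y, ∃ n, 0 < mpow Q n x y)
    (T : ℕ) (hT : 0 < T)
    (hTdvd : ∀ (x : Fin K) (n : ℕ), 0 < n → 0 < mpow Q n x x → T ∣ n)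
    (hTgcd : ∀ (x : Fin K) (d : ℕ), (∀ n : ℕ, 0 < n → 0 < mpow Q n x x → d ∣ n) → d ∣ T)
    (j : Fin K → ZMod T) (hj1 : j ⟨0, hK⟩ = 0)
    (hjstep : ∀ x y, 0 < Q x y → j y = j x + 1)
    (ρ : ℝ) (hρ : 0 < ρ)
    (ν ξ : Fin K → ℝ) (hνpos : ∀ y, 0 < ν y) (hξpos : ∀ y, 0 < ξ y)
    (hνeig : ∀ y, ∑ z, ν z * Q z y = ρ * ν y)
    (hξeig : ∀ y, ∑ z, Q y z * ξ z = ρ * ξ y)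
    (hνnorm : ∑ y, ν y = 1) (hνξ : ∑ y, ν y * ξ y = 1)
    (f : Fin K → ℂ) (x : Fin K) :
    (fun n : ℕ =>
        (∑ y, (mpow Q n x y : ℂ) * f y)
          - ∑ k ∈ Finset.range T,
              ((starRingEnd ℂ) ((ρ : ℂ) * Complex.exp (2 * (Real.pi : ℂ) * Complex.I * (k : ℂ) / (T : ℂ)))) ^ n *
                (starRingEnd ℂ) (wkC j ξ k x) *
                ∑ y, (starRingEnd ℂ) (vkC j ν k y) * f y)
      =o[Filter.atTop] (fun n : ℕ => ρ ^ n) := by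
  classical
  haveI : NeZero T := ⟨hT.ne'⟩
  have hρne : ρ ≠ 0 := ne_of_gt hρ
  have hTneC : (T : ℂ) ≠ 0 := by simp only [ne_eq, Nat.cast_eq_zero]; omega
  -- the normalized stochastic matrix
  set A : Fin K → Fin K → ℝ := fun u v => Q u v * ξ v / (ρ * ξ u) with hAdef
  have hA0 : ∀ u v, 0 ≤ A u v := by
    intro u v
    have h1 : 0 ≤ Q u v * ξ v := mul_nonneg (hQnn u v) (hξpos v).le
    have h2 : 0 < ρ * ξ u := mul_pos hρ (hξpos u)
    exact div_nonneg h1 h2.le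
  have hA1 : ∀ u, ∑ v, A u v = 1 := by
    intro u
    show ∑ v, Q u v * ξ v / (ρ * ξ u) = 1
    rw [← Finset.sum_div, hξeig u, div_self (ne_of_gt (mul_pos hρ (hξpos u)))]
  have hscale : ∀ (n : ℕ) (u v : Fin K),
      mpow A n u v = mpow Q n u v * ξ v / (ρ ^ n * ξ u) :=
    mpow_scale Q ρ hρ ξ hξpos
  have hposiff : ∀ (n : ℕ) (u v : Fin K), 0 < mpow A n u v ↔ 0 < mpow Q n u v := by
    intro n u v
    rw [hscale n u v]
    have hfac : 0 < ξ v / (ρ ^ n * ξ u) :=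
      div_pos (hξpos v) (mul_pos (pow_pos hρ n) (hξpos u))
    rw [mul_div_assoc]
    constructor
    · intro h
      by_contra hle
      push_neg at hle
      rcases lt_or_eq_of_le (mpow_nonneg hQnn n u v) with h' | h'
      · exact absurd h' (not_lt.2 hle)
      · rw [← h', zero_mul] at h; exact lt_irrefl 0 h
    · intro h
      exact mul_pos h hfac
  have hjA : ∀ u v, 0 < A u v → j v = j u + 1 := by
    intro u v h
    apply hjstep u v
    have h1 : 0 < mpow A 1 u v ↔ 0 < mpow Q 1 u v := hposiff 1 u v
    by_contra hle
    have hq0 : Q u v = 0 := le_antisymm (not_lt.1 hle) (hQnn u v)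
    have : A u v = 0 := by show Q u v * ξ v / (ρ * ξ u) = 0; rw [hq0, zero_mul, zero_div]
    rw [this] at h
    exact lt_irrefl 0 h
  -- stationary measure
  set π : Fin K → ℝ := fun u => ν u * ξ u with hπdef
  have hπ0 : ∀ u, 0 ≤ π u := fun u => (mul_pos (hνpos u) (hξpos u)).le
  have hπinv : ∀ v, ∑ z, π z * A z v = π v := by
    intro v
    show ∑ z, ν z * ξ z * (Q z v * ξ v / (ρ * ξ z)) = ν v * ξ v
    have hterm : ∀ z, ν z * ξ z * (Q z v * ξ v / (ρ * ξ z)) = ν z * Q z v * (ξ v / ρ) := by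
      intro z
      field_simp [hρne, ne_of_gt (hξpos z)]
    rw [Finset.sum_congr rfl fun z _ => hterm z, ← Finset.sum_mul, hνeig v]
    field_simp
  -- convergence for each y
  have hconv : ∀ y : Fin K,
      Filter.Tendsto
        (fun n : ℕ => mpow A n x y - (if ((n : ZMod T) = j y - j x) then (T : ℝ) * π y else 0))
        Filter.atTop (nhds 0) := by
    intro y
    refine conv_main hT hA0 hA1 hjA hπ0 hπinv hνξ x y ?_ ?_ ?_
    · intro u
      obtain ⟨n, hn⟩ := hirr u y
      exact ⟨n, (hposiff n u y).2 hn⟩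
    · intro n hn hp
      exact hTdvd y n hn ((hposiff n y y).1 hp)
    · intro d hd
      refine hTgcd y d fun n hn hp => hd n hn ((hposiff n y y).2 hp)
  -- integer exponent
  set a : ℕ → Fin K → ℤ := fun n y => ((j y).val : ℤ) - ((j x).val : ℤ) - (n : ℤ) with hadef
  have hcond_iff : ∀ (n : ℕ) (y : Fin K),
      ((T : ℤ) ∣ a n y) ↔ ((n : ZMod T) = j y - j x) := by
    intro n y
    have hcast : ((a n y : ℤ) : ZMod T) = j y - j x - (n : ZMod T) := by
      rw [hadef]
      push_cast
      simp [ZMod.natCast_val, ZMod.cast_id]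
    rw [← ZMod.intCast_zmod_eq_zero_iff_dvd, hcast, sub_eq_zero, eq_comm]
  -- main-term computation
  have hMain : ∀ n : ℕ,
      (∑ k ∈ Finset.range T,
        ((starRingEnd ℂ) ((ρ : ℂ) * Complex.exp (2 * (Real.pi : ℂ) * Complex.I * (k : ℂ) / (T : ℂ)))) ^ n *
          (starRingEnd ℂ) (wkC j ξ k x) *
          ∑ y, (starRingEnd ℂ) (vkC j ν k y) * f y)
      = ∑ y, (ρ : ℂ) ^ n * (ξ x : ℂ) * (ν y : ℂ) * f y *
          (if (T : ℤ) ∣ a n y then (T : ℂ) else 0) := by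
    intro n
    have hterm : ∀ (k : ℕ) (y : Fin K),
        ((starRingEnd ℂ) ((ρ : ℂ) * Complex.exp (2 * (Real.pi : ℂ) * Complex.I * (k : ℂ) / (T : ℂ)))) ^ n *
          (starRingEnd ℂ) (wkC j ξ k x) * ((starRingEnd ℂ) (vkC j ν k y) * f y)
        = (ρ : ℂ) ^ n * (ξ x : ℂ) * (ν y : ℂ) * f y *
            Complex.exp (2 * (Real.pi : ℂ) * Complex.I * (k : ℂ) * ((a n y : ℤ) : ℂ) / (T : ℂ)) := by
      intro k y
      have hcast : ((a n y : ℤ) : ℂ)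
          = (((j y).val : ℕ) : ℂ) - (((j x).val : ℕ) : ℂ) - (n : ℂ) := by
        rw [hadef]; push_cast; ring
      have hconjL : (starRingEnd ℂ) ((ρ : ℂ) * Complex.exp (2 * (Real.pi : ℂ) * Complex.I * (k : ℂ) / (T : ℂ)))
          = (ρ : ℂ) * Complex.exp (-(2 * (Real.pi : ℂ) * Complex.I * (k : ℂ)) / (T : ℂ)) := by
        rw [map_mul, Complex.conj_ofReal, ← Complex.exp_conj]
        congr 1
        simp only [map_div₀, map_mul, Complex.conj_I, map_ofNat, Complex.conj_ofReal, map_natCast]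
        ring
      have hconjw : (starRingEnd ℂ) (wkC j ξ k x)
          = Complex.exp (-(2 * (Real.pi : ℂ) * Complex.I * (((j x).val : ℕ) : ℂ) * (k : ℂ)) / (T : ℂ)) * (ξ x : ℂ) := by
        rw [wkC, map_mul, Complex.conj_ofReal, ← Complex.exp_conj]
        congr 2
        simp only [map_div₀, map_mul, Complex.conj_I, map_ofNat, Complex.conj_ofReal, map_natCast]
        ring
      have hconjv : (starRingEnd ℂ) (vkC j ν k y)
          = Complex.exp ((2 * (Real.pi : ℂ) * Complex.I * (((j y).val : ℕ) : ℂ) * (k : ℂ)) / (T : ℂ)) * (ν y : ℂ) := by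
        rw [vkC, map_mul, Complex.conj_ofReal, ← Complex.exp_conj]
        congr 2
        simp only [map_div₀, map_mul, map_neg, Complex.conj_I, map_ofNat, Complex.conj_ofReal, map_natCast]
        ring
      rw [hconjL, hconjw, hconjv, mul_pow, ← Complex.exp_nat_mul]
      rw [show ((ρ:ℂ))^n * Complex.exp ((n:ℂ) * (-(2 * (Real.pi : ℂ) * Complex.I * (k : ℂ)) / (T : ℂ))) *
          (Complex.exp (-(2 * (Real.pi : ℂ) * Complex.I * (((j x).val : ℕ) : ℂ) * (k : ℂ)) / (T : ℂ)) * (ξ x : ℂ)) *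
          (Complex.exp ((2 * (Real.pi : ℂ) * Complex.I * (((j y).val : ℕ) : ℂ) * (k : ℂ)) / (T : ℂ)) * (ν y : ℂ) * f y)
          = (ρ:ℂ)^n * (ξ x : ℂ) * (ν y : ℂ) * f y *
            (Complex.exp ((n:ℂ) * (-(2 * (Real.pi : ℂ) * Complex.I * (k : ℂ)) / (T : ℂ))) *
             Complex.exp (-(2 * (Real.pi : ℂ) * Complex.I * (((j x).val : ℕ) : ℂ) * (k : ℂ)) / (T : ℂ)) *
             Complex.exp ((2 * (Real.pi : ℂ) * Complex.I * (((j y).val : ℕ) : ℂ) * (k : ℂ)) / (T : ℂ))) from by ring]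
      rw [← Complex.exp_add, ← Complex.exp_add]
      congr 1
      rw [hcast]
      ring
    calc ∑ k ∈ Finset.range T,
        ((starRingEnd ℂ) ((ρ : ℂ) * Complex.exp (2 * (Real.pi : ℂ) * Complex.I * (k : ℂ) / (T : ℂ)))) ^ n *
          (starRingEnd ℂ) (wkC j ξ k x) * ∑ y, (starRingEnd ℂ) (vkC j ν k y) * f y
        = ∑ k ∈ Finset.range T, ∑ y,
            ((starRingEnd ℂ) ((ρ : ℂ) * Complex.exp (2 * (Real.pi : ℂ) * Complex.I * (k : ℂ) / (T : ℂ)))) ^ n *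
              (starRingEnd ℂ) (wkC j ξ k x) * ((starRingEnd ℂ) (vkC j ν k y) * f y) := by
          exact Finset.sum_congr rfl fun k _ => Finset.mul_sum _ _ _
      _ = ∑ y, ∑ k ∈ Finset.range T,
            ((starRingEnd ℂ) ((ρ : ℂ) * Complex.exp (2 * (Real.pi : ℂ) * Complex.I * (k : ℂ) / (T : ℂ)))) ^ n *
              (starRingEnd ℂ) (wkC j ξ k x) * ((starRingEnd ℂ) (vkC j ν k y) * f y) := Finset.sum_comm
      _ = ∑ y, ∑ k ∈ Finset.range T, (ρ : ℂ) ^ n * (ξ x : ℂ) * (ν y : ℂ) * f y *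
            Complex.exp (2 * (Real.pi : ℂ) * Complex.I * (k : ℂ) * ((a n y : ℤ) : ℂ) / (T : ℂ)) := by
          exact Finset.sum_congr rfl fun y _ => Finset.sum_congr rfl fun k _ => hterm k y
      _ = ∑ y, (ρ : ℂ) ^ n * (ξ x : ℂ) * (ν y : ℂ) * f y *
            ∑ k ∈ Finset.range T,
              Complex.exp (2 * (Real.pi : ℂ) * Complex.I * (k : ℂ) * ((a n y : ℤ) : ℂ) / (T : ℂ)) := by
          exact Finset.sum_congr rfl fun y _ => (Finset.mul_sum _ _ _).symm
      _ = ∑ y, (ρ : ℂ) ^ n * (ξ x : ℂ) * (ν y : ℂ) * f y *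
            (if (T : ℤ) ∣ a n y then (T : ℂ) else 0) := by
          exact Finset.sum_congr rfl fun y _ => by rw [exp_sum_int T hT (a n y)]
  -- the error term
  set e : Fin K → ℕ → ℝ := fun y n =>
    mpow A n x y - (if ((n : ZMod T) = j y - j x) then (T : ℝ) * π y else 0) with hedef
  have hdiff : ∀ n : ℕ,
      ((∑ y, (mpow Q n x y : ℂ) * f y)
        - ∑ k ∈ Finset.range T,
            ((starRingEnd ℂ) ((ρ : ℂ) * Complex.exp (2 * (Real.pi : ℂ) * Complex.I * (k : ℂ) / (T : ℂ)))) ^ n *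
              (starRingEnd ℂ) (wkC j ξ k x) *
              ∑ y, (starRingEnd ℂ) (vkC j ν k y) * f y)
      = (ρ : ℂ) ^ n * ∑ y, ((ξ x : ℂ) * f y / (ξ y : ℂ)) * ((e y n : ℝ) : ℂ) := by
    intro n
    rw [hMain n, Finset.mul_sum, ← Finset.sum_sub_distrib]
    refine Finset.sum_congr rfl fun y _ => ?_
    have hQA : (mpow Q n x y : ℝ) = ρ ^ n * ξ x * mpow A n x y / ξ y := by
      rw [hscale n x y]
      field_simp [pow_ne_zero n hρne, ne_of_gt (hξpos x), ne_of_gt (hξpos y)]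
    have heval : e y n
        = mpow A n x y - (if ((n : ZMod T) = j y - j x) then (T : ℝ) * (ν y * ξ y) else 0) := rfl
    rw [hQA, heval]
    have hξyne : ((ξ y : ℝ) : ℂ) ≠ 0 := by
      simp only [ne_eq, Complex.ofReal_eq_zero]
      exact ne_of_gt (hξpos y)
    by_cases hcond : ((n : ZMod T) = j y - j x)
    · rw [if_pos hcond, if_pos ((hcond_iff n y).2 hcond)]
      push_cast
      field_simp
    · rw [if_neg hcond, if_neg (fun h => hcond ((hcond_iff n y).1 h))]
      push_cast
      field_simp
      ring
  -- the coefficient sequence tends to zero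
  set c : ℕ → ℂ := fun n => ∑ y, ((ξ x : ℂ) * f y / (ξ y : ℂ)) * ((e y n : ℝ) : ℂ) with hcdef
  have hc0 : Filter.Tendsto c Filter.atTop (nhds 0) := by
    have h1 : ∀ y : Fin K, y ∈ Finset.univ →
        Filter.Tendsto (fun n => ((ξ x : ℂ) * f y / (ξ y : ℂ)) * ((e y n : ℝ) : ℂ))
          Filter.atTop (nhds (((ξ x : ℂ) * f y / (ξ y : ℂ)) * 0)) := by
      intro y _
      refine Filter.Tendsto.const_mul _ ?_
      have h2 : Filter.Tendsto (fun n => ((e y n : ℝ) : ℂ)) Filter.atTop (nhds ((0 : ℝ) : ℂ)) :=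
        (Complex.continuous_ofReal.tendsto 0).comp (hconv y)
      simpa using h2
    have := tendsto_finset_sum Finset.univ h1
    simpa using this
  -- conclusion
  have hfeq : (fun n : ℕ =>
      (∑ y, (mpow Q n x y : ℂ) * f y)
        - ∑ k ∈ Finset.range T,
            ((starRingEnd ℂ) ((ρ : ℂ) * Complex.exp (2 * (Real.pi : ℂ) * Complex.I * (k : ℂ) / (T : ℂ)))) ^ n *
              (starRingEnd ℂ) (wkC j ξ k x) *
              ∑ y, (starRingEnd ℂ) (vkC j ν k y) * f y)
      = fun n : ℕ => (ρ : ℂ) ^ n * c n := funext fun n => hdiff n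
  rw [hfeq, Asymptotics.isLittleO_iff]
  intro ε hε
  obtain ⟨N, hN⟩ := Metric.tendsto_atTop.1 hc0 ε hε
  rw [Filter.eventually_atTop]
  refine ⟨N, fun n hn => ?_⟩
  have hcb : ‖c n‖ ≤ ε := by
    have := hN n hn
    rw [dist_eq_norm, sub_zero] at this
    exact this.le
  have hb1 : ‖(ρ : ℂ) ^ n * c n‖ = ρ ^ n * ‖c n‖ := by
    rw [norm_mul]
    congr 1
    rw [norm_pow, Complex.norm_real, Real.norm_eq_abs, abs_of_pos hρ]
  rw [hb1, Real.norm_eq_abs, abs_of_pos (pow_pos hρ n)]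
  calc ρ ^ n * ‖c n‖ ≤ ρ ^ n * ε := by
        exact mul_le_mul_of_nonneg_left hcb (pow_pos hρ n).le
    _ = ε * ρ ^ n := by ring
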